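/- Let λ₁ > 0, M > 0, 0 < p ≤ 1 with p·λ₁·M > 1, and let Q < 0 satisfy p·λ₁·e^{M Q} = Q + p·λ₁. Define g(x) = (1 − e^{Q x})/M for 0 ≤ x < M and g(x) = −Q e^{Q x}/(M(Q + p·λ₁)) for x ≥ M, set F_X(t) = 1 − e^{−λ₁ t} and G(x) = ∫₀ˣ g(u)du. Then for every x ≥ M, G(x) = (1 − p)∫₀ˣ F_X(x − u) g(u) du + p·[ ∫_M^{M+x} F_X(x − u + M) g(u) du + ∫₀^M F_X(x − u) g(u) du ]. -/

import Mathlib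

open Real MeasureTheory

/-- The stationary density of the buffer energy under the incremental on-off policy:
`g(x) = (1 - exp(Q x))/M` for `x < M` and `g(x) = -Q exp(Q x)/(M (Q + p λ₁))` for `x ≥ M`. -/
noncomputable def onOffDensity (lam M p Q : ℝ) (x : ℝ) : ℝ :=
  if x < M then (1 - Real.exp (Q * x)) / M
  else (-Q * Real.exp (Q * x)) / (M * (Q + p * lam))

lemma integ_exp (k : ℝ) (hk : k ≠ 0) (a b : ℝ) :
    ∫ u in a..b, Real.exp (k * u) = (Real.exp (k * b) - Real.exp (k * a)) / k := by
  have h : ∀ u ∈ Set.uIcc a b,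
      HasDerivAt (fun v => Real.exp (k * v) / k) (Real.exp (k * u)) u := by
    intro u _
    have h1 : HasDerivAt (fun v : ℝ => k * v) k u := by
      simpa using (hasDerivAt_id u).const_mul k
    have h2 := (h1.exp).div_const k
    simpa [mul_div_assoc, mul_div_cancel_right₀ _ hk] using h2
  have := intervalIntegral.integral_eq_sub_of_hasDerivAt h
    ((Real.continuous_exp.comp (continuous_const.mul continuous_id)).intervalIntegrable a b)
  rw [this]; ring

lemma integ3 (a b k1 k2 k3 c0 c1 c2 c3 : ℝ) (h1 : k1 ≠ 0) (h2 : k2 ≠ 0) (h3 : k3 ≠ 0) :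
    ∫ u in a..b,
      (c0 + c1 * Real.exp (k1 * u) + c2 * Real.exp (k2 * u) + c3 * Real.exp (k3 * u)) =
      c0 * (b - a) + c1 * ((Real.exp (k1 * b) - Real.exp (k1 * a)) / k1)
        + c2 * ((Real.exp (k2 * b) - Real.exp (k2 * a)) / k2)
        + c3 * ((Real.exp (k3 * b) - Real.exp (k3 * a)) / k3) := by
  have i0 : IntervalIntegrable (fun _ : ℝ => c0) volume a b :=
    intervalIntegrable_const
  have iexp : ∀ c k : ℝ, IntervalIntegrable (fun u => c * Real.exp (k * u)) volume a b :=
    fun c k => ((continuous_const.mul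
      (Real.continuous_exp.comp (continuous_const.mul continuous_id))).intervalIntegrable a b)
  rw [intervalIntegral.integral_add ((i0.add (iexp c1 k1)).add (iexp c2 k2)) (iexp c3 k3),
      intervalIntegral.integral_add (i0.add (iexp c1 k1)) (iexp c2 k2),
      intervalIntegral.integral_add i0 (iexp c1 k1),
      intervalIntegral.integral_const,
      intervalIntegral.integral_const_mul, intervalIntegral.integral_const_mul,
      intervalIntegral.integral_const_mul,
      integ_exp k1 h1, integ_exp k2 h2, integ_exp k3 h3, smul_eq_mul]
  ring

set_option maxHeartbeats 2000000 in
/-- Verification of Theorem 4 (case `x ≥ M`): the candidate stationary density `g`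
satisfies the steady-state integral equation for the CDF `G(x) = ∫₀ˣ g`. -/
theorem stmt4 (lam M p Q : ℝ) (hlam : 0 < lam) (hM : 0 < M)
    (hp0 : 0 < p) (hp1 : p ≤ 1) (hphi : 1 < p * lam * M)
    (hQneg : Q < 0) (hQeq : p * lam * Real.exp (M * Q) = Q + p * lam) :
    ∀ x : ℝ, M ≤ x →
      (∫ u in (0:ℝ)..x, onOffDensity lam M p Q u) =
        (1 - p) * (∫ u in (0:ℝ)..x,
            (1 - Real.exp (-lam * (x - u))) * onOffDensity lam M p Q u)
        + p * ((∫ u in M..(M + x),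
              (1 - Real.exp (-lam * (x - u + M))) * onOffDensity lam M p Q u)
            + ∫ u in (0:ℝ)..M,
              (1 - Real.exp (-lam * (x - u))) * onOffDensity lam M p Q u) := by
  intro x hx
  have hQ : Q ≠ 0 := ne_of_lt hQneg
  have hl : lam ≠ 0 := ne_of_gt hlam
  have hMne : M ≠ 0 := ne_of_gt hM
  have hD : 0 < Q + p * lam := by rw [← hQeq]; positivity
  have hA : 0 < Q + lam := by nlinarith
  have hAne : Q + lam ≠ 0 := ne_of_gt hA
  have hDne : Q + p * lam ≠ 0 := ne_of_gt hD
  have hMx : M ≤ M + x := by linarith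
  have hae : ∀ᵐ u : ℝ, u ≠ M := by
    have h0 : (volume : Measure ℝ) {M} = 0 := measure_singleton M
    rw [ae_iff]
    simpa using h0
  -- a point of uIoc 0 M that is not M is < M
  have hlt : ∀ u : ℝ, u ∈ Set.uIoc (0:ℝ) M → u ≠ M → u < M := by
    intro u huI hu
    rw [Set.uIoc_of_le hM.le] at huI
    exact lt_of_le_of_ne huI.2 hu
  -- exponent decompositions (pointwise in u)
  have eQl : ∀ u : ℝ, Real.exp ((Q + lam) * u) = Real.exp (Q * u) * Real.exp (lam * u) := by
    intro u; rw [show (Q + lam) * u = Q * u + lam * u by ring, Real.exp_add]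
  have eW : ∀ u : ℝ, Real.exp (-lam * (x - u)) = Real.exp (lam * u) * (Real.exp (lam * x))⁻¹ := by
    intro u
    rw [show -lam * (x - u) = lam * u - lam * x by ring, Real.exp_sub, div_eq_mul_inv]
  have eW' : ∀ u : ℝ, Real.exp (-lam * (x - u + M))
      = Real.exp (lam * u) * ((Real.exp (lam * x))⁻¹ * (Real.exp (lam * M))⁻¹) := by
    intro u
    rw [show -lam * (x - u + M) = lam * u - (lam * x + lam * M) by ring, Real.exp_sub,
      Real.exp_add, div_eq_mul_inv, mul_inv]
  -- rewrite the five basic integrals into `integ3` shape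
  have hT0 : (∫ u in (0:ℝ)..M, onOffDensity lam M p Q u)
      = ∫ u in (0:ℝ)..M, (1 / M + (-(1 / M)) * Real.exp (Q * u)
          + 0 * Real.exp (lam * u) + 0 * Real.exp ((Q + lam) * u)) := by
    apply intervalIntegral.integral_congr_ae
    filter_upwards [hae] with u hu huI
    have h1 : u < M := hlt u huI hu
    simp only [onOffDensity, if_pos h1]
    ring
  have hT1 : (∫ u in M..x, onOffDensity lam M p Q u)
      = ∫ u in M..x, ((0:ℝ) + (-Q / (M * (Q + p * lam))) * Real.exp (Q * u)
          + 0 * Real.exp (lam * u) + 0 * Real.exp ((Q + lam) * u)) := by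
    apply intervalIntegral.integral_congr
    intro u hu
    rw [Set.uIcc_of_le hx] at hu
    have h1 : ¬ u < M := not_lt.2 hu.1
    simp only [onOffDensity, if_neg h1]
    ring
  have hT2 : (∫ u in (0:ℝ)..M, (1 - Real.exp (-lam * (x - u))) * onOffDensity lam M p Q u)
      = ∫ u in (0:ℝ)..M, (1 / M + (-(1 / M)) * Real.exp (Q * u)
          + (-((Real.exp (lam * x))⁻¹ / M)) * Real.exp (lam * u)
          + ((Real.exp (lam * x))⁻¹ / M) * Real.exp ((Q + lam) * u)) := by
    apply intervalIntegral.integral_congr_ae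
    filter_upwards [hae] with u hu huI
    have h1 : u < M := hlt u huI hu
    simp only [onOffDensity, if_pos h1, eW u, eQl u]
    field_simp
    ring
  have hT3 : (∫ u in M..x, (1 - Real.exp (-lam * (x - u))) * onOffDensity lam M p Q u)
      = ∫ u in M..x, ((0:ℝ) + (-Q / (M * (Q + p * lam))) * Real.exp (Q * u)
          + 0 * Real.exp (lam * u)
          + (-(-Q / (M * (Q + p * lam)) * (Real.exp (lam * x))⁻¹)) * Real.exp ((Q + lam) * u)) := by
    apply intervalIntegral.integral_congr
    intro u hu
    rw [Set.uIcc_of_le hx] at hu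
    have h1 : ¬ u < M := not_lt.2 hu.1
    simp only [onOffDensity, if_neg h1, eW u, eQl u]
    field_simp
    ring
  have hT4 : (∫ u in M..(M + x),
        (1 - Real.exp (-lam * (x - u + M))) * onOffDensity lam M p Q u)
      = ∫ u in M..(M + x), ((0:ℝ) + (-Q / (M * (Q + p * lam))) * Real.exp (Q * u)
          + 0 * Real.exp (lam * u)
          + (-(-Q / (M * (Q + p * lam)) * ((Real.exp (lam * x))⁻¹ * (Real.exp (lam * M))⁻¹)))
            * Real.exp ((Q + lam) * u)) := by
    apply intervalIntegral.integral_congr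
    intro u hu
    rw [Set.uIcc_of_le hMx] at hu
    have h1 : ¬ u < M := not_lt.2 hu.1
    simp only [onOffDensity, if_neg h1, eW' u, eQl u]
    field_simp
    ring
  -- integrability for splitting at M
  have haeI : ∀ᵐ u ∂(volume.restrict (Set.uIoc (0:ℝ) M)), u ≠ M := ae_restrict_of_ae hae
  have hmemI : ∀ᵐ u ∂(volume.restrict (Set.uIoc (0:ℝ) M)), u ∈ Set.uIoc (0:ℝ) M :=
    ae_restrict_mem measurableSet_uIoc
  have i1 : IntervalIntegrable (onOffDensity lam M p Q) volume 0 M := by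
    have hc : Continuous (fun u : ℝ => (1 - Real.exp (Q * u)) / M) := by fun_prop
    refine (hc.intervalIntegrable 0 M).congr_ae ?_
    filter_upwards [haeI, hmemI] with u hu huI
    have h1 : u < M := hlt u huI hu
    simp [onOffDensity, if_pos h1]
  have i2 : IntervalIntegrable
      (fun u => (1 - Real.exp (-lam * (x - u))) * onOffDensity lam M p Q u) volume 0 M := by
    have hc : Continuous (fun u : ℝ =>
        (1 - Real.exp (-lam * (x - u))) * ((1 - Real.exp (Q * u)) / M)) := by fun_prop
    refine (hc.intervalIntegrable 0 M).congr_ae ?_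
    filter_upwards [haeI, hmemI] with u hu huI
    have h1 : u < M := hlt u huI hu
    simp [onOffDensity, if_pos h1]
  have hmemI2 : ∀ᵐ u ∂(volume.restrict (Set.uIoc M x)), u ∈ Set.uIoc M x :=
    ae_restrict_mem measurableSet_uIoc
  have i3 : IntervalIntegrable (onOffDensity lam M p Q) volume M x := by
    have hc : Continuous (fun u : ℝ => (-Q * Real.exp (Q * u)) / (M * (Q + p * lam))) := by fun_prop
    refine (hc.intervalIntegrable M x).congr_ae ?_
    filter_upwards [hmemI2] with u huI
    rw [Set.uIoc_of_le hx] at huI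
    have h1 : ¬ u < M := not_lt.2 huI.1.le
    simp [onOffDensity, if_neg h1]
  have i4 : IntervalIntegrable
      (fun u => (1 - Real.exp (-lam * (x - u))) * onOffDensity lam M p Q u) volume M x := by
    have hc : Continuous (fun u : ℝ =>
        (1 - Real.exp (-lam * (x - u))) * ((-Q * Real.exp (Q * u)) / (M * (Q + p * lam)))) := by fun_prop
    refine (hc.intervalIntegrable M x).congr_ae ?_
    filter_upwards [hmemI2] with u huI
    rw [Set.uIoc_of_le hx] at huI
    have h1 : ¬ u < M := not_lt.2 huI.1.le
    simp [onOffDensity, if_neg h1]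
  have split1 := intervalIntegral.integral_add_adjacent_intervals i1 i3
  have split2 := intervalIntegral.integral_add_adjacent_intervals i2 i4
  rw [← split1, ← split2, hT0, hT1, hT2, hT3, hT4,
    integ3 0 M Q lam (Q + lam) (1 / M) (-(1 / M)) 0 0 hQ hl hAne,
    integ3 M x Q lam (Q + lam) 0 (-Q / (M * (Q + p * lam))) 0 0 hQ hl hAne,
    integ3 0 M Q lam (Q + lam) (1 / M) (-(1 / M)) (-((Real.exp (lam * x))⁻¹ / M))
      ((Real.exp (lam * x))⁻¹ / M) hQ hl hAne,
    integ3 M x Q lam (Q + lam) 0 (-Q / (M * (Q + p * lam))) 0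
      (-(-Q / (M * (Q + p * lam)) * (Real.exp (lam * x))⁻¹)) hQ hl hAne,
    integ3 M (M + x) Q lam (Q + lam) 0 (-Q / (M * (Q + p * lam))) 0
      (-(-Q / (M * (Q + p * lam)) * ((Real.exp (lam * x))⁻¹ * (Real.exp (lam * M))⁻¹)))
      hQ hl hAne]
  -- decompose compound exponentials into the four atoms
  have hEM : Real.exp ((Q + lam) * M) = Real.exp (Q * M) * Real.exp (lam * M) := eQl M
  have hEx : Real.exp ((Q + lam) * x) = Real.exp (Q * x) * Real.exp (lam * x) := eQl x
  have hQMx : Real.exp (Q * (M + x)) = Real.exp (Q * M) * Real.exp (Q * x) := by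
    rw [show Q * (M + x) = Q * M + Q * x by ring, Real.exp_add]
  have hAMx : Real.exp ((Q + lam) * (M + x))
      = Real.exp (Q * M) * Real.exp (lam * M) * (Real.exp (Q * x) * Real.exp (lam * x)) := by
    rw [show (Q + lam) * (M + x) = (Q * M + lam * M) + (Q * x + lam * x) by ring,
      Real.exp_add, Real.exp_add, Real.exp_add]
  have hlMx : Real.exp (lam * (M + x)) = Real.exp (lam * M) * Real.exp (lam * x) := by
    rw [show lam * (M + x) = lam * M + lam * x by ring, Real.exp_add]
  have ha : Real.exp (Q * M) = (Q + p * lam) / (p * lam) := by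
    rw [show Q * M = M * Q by ring, eq_div_iff (by positivity : p * lam ≠ 0)]
    linarith [hQeq]
  rw [hEM, hEx, hQMx, hAMx, hlMx, ha]
  simp only [mul_zero, Real.exp_zero]
  have hE3 : Real.exp (lam * M) ≠ 0 := Real.exp_ne_zero _
  have hE4 : Real.exp (lam * x) ≠ 0 := Real.exp_ne_zero _
  field_simp
  ring
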